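/- Suppose (u_h, v_h, q_h) solves the conservative semi-discrete LDG Scheme C1 on [0,T]. Then for every t ∈ [0,T]: (d/dt) ∫_a^b u_h(t,x) dx = 0 (conservation of mass E₀) and (d/dt) ∫_a^b u_h(t,x)² dx = 0 (conservation of energy E₂). -/

import Mathlib

open Polynomial Set

noncomputable section

namespace FW

variable {N : ℕ}

/-- Minus trace `ω⁻` at interface `j+1/2` (right end of cell `j`). -/
def trM (x : Fin (N + 1) → ℝ) (ω : Fin N → Polynomial ℝ) (j : Fin N) : ℝ :=
  (ω j).eval (x j.succ)

/-- Plus trace `ω⁺` at interface `j+1/2` (left end of the next cell, cyclically). -/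
def trP [NeZero N] (x : Fin (N + 1) → ℝ) (ω : Fin N → Polynomial ℝ) (j : Fin N) : ℝ :=
  (ω (j + 1)).eval (x (j + 1).castSucc)

/-- Average trace `{ω}`. -/
def trA [NeZero N] (x : Fin (N + 1) → ℝ) (ω : Fin N → Polynomial ℝ) (j : Fin N) : ℝ :=
  (trP x ω j + trM x ω j) / 2

/-- Jump `[ω]`. -/
def jmp [NeZero N] (x : Fin (N + 1) → ℝ) (ω : Fin N → Polynomial ℝ) (j : Fin N) : ℝ :=
  trP x ω j - trM x ω j

/-- Cell L² pairing `(u, φ)_{I_j}` of a piecewise polynomial with a test polynomial. -/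
def ipj (x : Fin (N + 1) → ℝ) (u : Fin N → Polynomial ℝ) (j : Fin N) (φ : Polynomial ℝ) : ℝ :=
  ∫ t in (x j.castSucc)..(x j.succ), (u j).eval t * φ.eval t

/-- Cell pairing `(f∘u, φ)_{I_j}`. -/
def ipfj (x : Fin (N + 1) → ℝ) (f : ℝ → ℝ) (u : Fin N → Polynomial ℝ) (j : Fin N)
    (φ : Polynomial ℝ) : ℝ :=
  ∫ t in (x j.castSucc)..(x j.succ), f ((u j).eval t) * φ.eval t

/-- Boundary pairing `⟨g, φ⟩_{I_j}` for interface values `g`. -/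
def bdj [NeZero N] (x : Fin (N + 1) → ℝ) (g : Fin N → ℝ) (j : Fin N) (φ : Polynomial ℝ) : ℝ :=
  g j * φ.eval (x j.succ) - g (j - 1) * φ.eval (x j.castSucc)

/-- Membership in the space `V_h^k` of piecewise polynomials of degree at most `k`. -/
def memV (k : ℕ) (ω : Fin N → Polynomial ℝ) : Prop :=
  ∀ j, (ω j).degree ≤ (k : WithBot ℕ)

/-- `L⁻(ω, φ)`. -/
def Lm [NeZero N] (x : Fin (N + 1) → ℝ) (ω φ : Fin N → Polynomial ℝ) : ℝ :=
  ∑ j, (-(ipj x ω j (derivative (φ j))) + bdj x (trM x ω) j (φ j))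

/-- `L⁺(ω, φ)`. -/
def Lp [NeZero N] (x : Fin (N + 1) → ℝ) (ω φ : Fin N → Polynomial ℝ) : ℝ :=
  ∑ j, (-(ipj x ω j (derivative (φ j))) + bdj x (trP x ω) j (φ j))

/-- `L^c(ω, φ)`. -/
def Lc [NeZero N] (x : Fin (N + 1) → ℝ) (ω φ : Fin N → Polynomial ℝ) : ℝ :=
  ∑ j, (-(ipj x ω j (derivative (φ j))) + bdj x (trA x ω) j (φ j))

/-- Godunov numerical flux. -/
def godunov (f : ℝ → ℝ) (c d : ℝ) : ℝ :=
  if c < d then sInf (f '' Set.Icc c d) else sSup (f '' Set.Icc d c)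

/-- Conservative numerical flux for `f(u) = u^p/p`, `F(u) = u^(p+1)/(p(p+1))`. -/
def consFlux (p : ℕ) (c d : ℝ) : ℝ :=
  if c = d then c ^ p / (p : ℝ)
  else (d ^ (p + 1) / ((p : ℝ) * ((p : ℝ) + 1)) - c ^ (p + 1) / ((p : ℝ) * ((p : ℝ) + 1))) / (d - c)

/-- Dissipative (Godunov-flux) nonlinear form `N^d`. -/
def Nd [NeZero N] (x : Fin (N + 1) → ℝ) (f : ℝ → ℝ) (ω φ : Fin N → Polynomial ℝ) : ℝ :=
  ∑ j, (-(ipfj x f ω j (derivative (φ j)))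
    + bdj x (fun i => godunov f (trM x ω i) (trP x ω i)) j (φ j))

/-- Conservative-flux nonlinear form `N^c`. -/
def Nc [NeZero N] (x : Fin (N + 1) → ℝ) (p : ℕ) (ω φ : Fin N → Polynomial ℝ) : ℝ :=
  ∑ j, (-(ipfj x (fun w => w ^ p / (p : ℝ)) ω j (derivative (φ j)))
    + bdj x (fun i => consFlux p (trM x ω i) (trP x ω i)) j (φ j))

end FW

section Aux

open intervalIntegral

private theorem poly_ftc (P : Polynomial ℝ) (c d : ℝ) :
    ∫ y in c..d, (derivative P).eval y = P.eval d - P.eval c := by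
  refine intervalIntegral.integral_eq_sub_of_hasDerivAt (fun y _ => P.hasDerivAt y) ?_
  exact ((derivative P).continuous_aeval).intervalIntegrable c d

private theorem sum_shift {N : ℕ} [NeZero N] (g : Fin N → ℝ) :
    ∑ j, (g j - g (j - 1)) = 0 := by
  rw [Finset.sum_sub_distrib]
  rw [Fintype.sum_equiv (Equiv.subRight (1 : Fin N)) (fun j => g (j - 1)) g (fun j => rfl)]
  ring

private theorem fin_sub_add {N : ℕ} [NeZero N] (j : Fin N) : j - 1 + 1 = j := by exact sub_add_cancel j 1

private theorem trP_sub_one {N : ℕ} [NeZero N] (x : Fin (N + 1) → ℝ)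
    (ω : Fin N → Polynomial ℝ) (j : Fin N) :
    FW.trP x ω (j - 1) = (ω j).eval (x j.castSucc) := by
  unfold FW.trP
  rw [fin_sub_add]

private theorem integral_eval (k : ℕ) (P : Polynomial ℝ) (hP : P.degree ≤ (k : WithBot ℕ))
    (c d : ℝ) :
    ∫ y in c..d, P.eval y
      = ∑ m ∈ Finset.range (k+1), P.coeff m * ∫ y in c..d, y ^ m := by
  have hPn := Nat.lt_succ_of_le (Polynomial.natDegree_le_iff_degree_le.2 hP)
  calc ∫ y in c..d, P.eval y
      = ∫ y in c..d, ∑ m ∈ Finset.range (k+1), P.coeff m * y ^ m :=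
        intervalIntegral.integral_congr (fun y _ => Polynomial.eval_eq_sum_range' hPn y)
    _ = _ := by
        rw [intervalIntegral.integral_finset_sum]
        · exact Finset.sum_congr rfl fun m _ => intervalIntegral.integral_const_mul _ _
        · intro m _; exact (Continuous.intervalIntegrable (by continuity) _ _)

private theorem integral_eval_mul_eval (k : ℕ) (P Q : Polynomial ℝ)
    (hP : P.degree ≤ (k : WithBot ℕ)) (hQ : Q.degree ≤ (k : WithBot ℕ)) (c d : ℝ) :
    ∫ y in c..d, P.eval y * Q.eval y
      = ∑ m ∈ Finset.range (k+1), ∑ n ∈ Finset.range (k+1),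
          P.coeff m * Q.coeff n * ∫ y in c..d, y ^ m * y ^ n := by
  have hPn := Nat.lt_succ_of_le (Polynomial.natDegree_le_iff_degree_le.2 hP)
  have hQn := Nat.lt_succ_of_le (Polynomial.natDegree_le_iff_degree_le.2 hQ)
  have h1 : ∀ y : ℝ, P.eval y * Q.eval y
      = ∑ m ∈ Finset.range (k+1), ∑ n ∈ Finset.range (k+1),
          P.coeff m * Q.coeff n * (y ^ m * y ^ n) := by
    intro y
    rw [Polynomial.eval_eq_sum_range' hPn, Polynomial.eval_eq_sum_range' hQn,
      Finset.sum_mul_sum]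
    exact Finset.sum_congr rfl fun m _ => Finset.sum_congr rfl fun n _ => by ring
  calc ∫ y in c..d, P.eval y * Q.eval y
      = ∫ y in c..d, ∑ m ∈ Finset.range (k+1), ∑ n ∈ Finset.range (k+1),
          P.coeff m * Q.coeff n * (y ^ m * y ^ n) :=
        intervalIntegral.integral_congr (fun y _ => h1 y)
    _ = _ := by
        rw [intervalIntegral.integral_finset_sum]
        · refine Finset.sum_congr rfl fun m _ => ?_
          rw [intervalIntegral.integral_finset_sum]
          · exact Finset.sum_congr rfl fun n _ => intervalIntegral.integral_const_mul _ _
          · intro n _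
            exact (Continuous.intervalIntegrable (by continuity) _ _)
        · intro m _
          apply Continuous.intervalIntegrable
          continuity

private theorem hasDeriv_int (k : ℕ) (c d : ℝ) (s : Set ℝ) (t : ℝ)
    (P : ℝ → Polynomial ℝ) (P' : Polynomial ℝ)
    (hdeg : ∀ σ ∈ s, (P σ).degree ≤ (k : WithBot ℕ)) (hdeg' : P'.degree ≤ (k : WithBot ℕ))
    (hts : t ∈ s)
    (hd : ∀ m, HasDerivWithinAt (fun σ => (P σ).coeff m) (P'.coeff m) s t) :
    HasDerivWithinAt (fun σ => ∫ y in c..d, (P σ).eval y)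
      (∫ y in c..d, P'.eval y) s t := by
  have hg : HasDerivWithinAt
      (fun σ => ∑ m ∈ Finset.range (k+1), (P σ).coeff m * ∫ y in c..d, y ^ m)
      (∑ m ∈ Finset.range (k+1), P'.coeff m * ∫ y in c..d, y ^ m) s t :=
    HasDerivWithinAt.fun_sum (fun m _ => (hd m).mul_const _)
  rw [integral_eval k P' hdeg' c d]
  exact hg.congr (fun σ hσ => integral_eval k (P σ) (hdeg σ hσ) c d)
    (integral_eval k (P t) (hdeg t hts) c d)

private theorem hasDeriv_int_sq (k : ℕ) (c d : ℝ) (s : Set ℝ) (t : ℝ)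
    (P : ℝ → Polynomial ℝ) (P' : Polynomial ℝ)
    (hdeg : ∀ σ ∈ s, (P σ).degree ≤ (k : WithBot ℕ)) (hdeg' : P'.degree ≤ (k : WithBot ℕ))
    (hts : t ∈ s)
    (hd : ∀ m, HasDerivWithinAt (fun σ => (P σ).coeff m) (P'.coeff m) s t) :
    HasDerivWithinAt (fun σ => ∫ y in c..d, ((P σ).eval y) ^ 2)
      (2 * ∫ y in c..d, P'.eval y * (P t).eval y) s t := by
  set J : ℕ → ℕ → ℝ := fun m n => ∫ y in c..d, y ^ m * y ^ n with hJ
  have hJsymm : ∀ m n, J m n = J n m := fun m n =>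
    intervalIntegral.integral_congr (fun y _ => mul_comm _ _)
  have hg : HasDerivWithinAt
      (fun σ => ∑ m ∈ Finset.range (k+1), ∑ n ∈ Finset.range (k+1),
          (P σ).coeff m * (P σ).coeff n * J m n)
      (∑ m ∈ Finset.range (k+1), ∑ n ∈ Finset.range (k+1),
          (P'.coeff m * (P t).coeff n + (P t).coeff m * P'.coeff n) * J m n) s t :=
    HasDerivWithinAt.fun_sum (fun m _ => HasDerivWithinAt.fun_sum (fun n _ =>
      ((hd m).mul (hd n)).mul_const _))
  have hswap : ∑ m ∈ Finset.range (k+1), ∑ n ∈ Finset.range (k+1),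
        (P t).coeff m * P'.coeff n * J m n
      = ∑ m ∈ Finset.range (k+1), ∑ n ∈ Finset.range (k+1),
        P'.coeff m * (P t).coeff n * J m n := by
    rw [Finset.sum_comm]
    exact Finset.sum_congr rfl fun m _ => Finset.sum_congr rfl fun n _ => by
      rw [hJsymm]; ring
  have hD : (∑ m ∈ Finset.range (k+1), ∑ n ∈ Finset.range (k+1),
        (P'.coeff m * (P t).coeff n + (P t).coeff m * P'.coeff n) * J m n)
      = 2 * ∫ y in c..d, P'.eval y * (P t).eval y := by
    rw [integral_eval_mul_eval k P' (P t) hdeg' (hdeg t hts) c d]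
    simp only [add_mul, Finset.sum_add_distrib]
    rw [hswap]; ring
  rw [← hD]
  refine hg.congr (fun σ hσ => ?_) ?_
  · rw [show (fun y => ((P σ).eval y)^2) = fun y => (P σ).eval y * (P σ).eval y from
      funext fun y => sq _]
    exact integral_eval_mul_eval k (P σ) (P σ) (hdeg σ hσ) (hdeg σ hσ) c d
  · rw [show (fun y => ((P t).eval y)^2) = fun y => (P t).eval y * (P t).eval y from
      funext fun y => sq _]
    exact integral_eval_mul_eval k (P t) (P t) (hdeg t hts) (hdeg t hts) c d

/-- Integration by parts for two polynomials on a cell. -/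
private theorem ibp (wj fj : Polynomial ℝ) (c d : ℝ) :
    (∫ y in c..d, wj.eval y * (derivative fj).eval y)
      + ∫ y in c..d, fj.eval y * (derivative wj).eval y
    = wj.eval d * fj.eval d - wj.eval c * fj.eval c := by
  have h1 : IntervalIntegrable (fun y => wj.eval y * (derivative fj).eval y)
      MeasureTheory.volume c d :=
    Continuous.intervalIntegrable
      (wj.continuous_aeval.mul (derivative fj).continuous_aeval) _ _
  have h2 : IntervalIntegrable (fun y => fj.eval y * (derivative wj).eval y)
      MeasureTheory.volume c d :=
    Continuous.intervalIntegrable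
      (fj.continuous_aeval.mul (derivative wj).continuous_aeval) _ _
  rw [← intervalIntegral.integral_add h1 h2]
  have h3 : ∀ y : ℝ, wj.eval y * (derivative fj).eval y + fj.eval y * (derivative wj).eval y
      = (derivative (wj * fj)).eval y := by
    intro y; rw [Polynomial.derivative_mul]; simp; ring
  rw [intervalIntegral.integral_congr (fun y (_ : y ∈ _) => h3 y), poly_ftc]
  simp

/-- Skew-symmetry of the central form `L^c`. -/
private theorem Lc_skew {N : ℕ} [NeZero N] (x : Fin (N + 1) → ℝ)
    (ω φ : Fin N → Polynomial ℝ) :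
    FW.Lc x ω φ + FW.Lc x φ ω = 0 := by
  classical
  set G : Fin N → ℝ := fun i =>
    FW.trA x ω i * FW.trP x φ i + FW.trA x φ i * FW.trP x ω i
      - FW.trP x ω i * FW.trP x φ i with hG
  unfold FW.Lc
  rw [← Finset.sum_add_distrib]
  have perj : ∀ j : Fin N,
      (-(FW.ipj x ω j (derivative (φ j))) + FW.bdj x (FW.trA x ω) j (φ j)
        + (-(FW.ipj x φ j (derivative (ω j))) + FW.bdj x (FW.trA x φ) j (ω j)))
      = G j - G (j - 1) := by
    intro j
    have hibp : FW.ipj x ω j (derivative (φ j)) + FW.ipj x φ j (derivative (ω j))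
        = FW.trM x ω j * FW.trM x φ j - FW.trP x ω (j-1) * FW.trP x φ (j-1) := by
      unfold FW.ipj FW.trM
      rw [trP_sub_one, trP_sub_one]
      exact ibp _ _ _ _
    have hb1 : FW.bdj x (FW.trA x ω) j (φ j)
        = FW.trA x ω j * FW.trM x φ j - FW.trA x ω (j-1) * FW.trP x φ (j-1) := by
      unfold FW.bdj FW.trM
      rw [trP_sub_one]
    have hb2 : FW.bdj x (FW.trA x φ) j (ω j)
        = FW.trA x φ j * FW.trM x ω j - FW.trA x φ (j-1) * FW.trP x ω (j-1) := by
      unfold FW.bdj FW.trM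
      rw [trP_sub_one]
    calc (-(FW.ipj x ω j (derivative (φ j))) + FW.bdj x (FW.trA x ω) j (φ j)
        + (-(FW.ipj x φ j (derivative (ω j))) + FW.bdj x (FW.trA x φ) j (ω j)))
        = -(FW.ipj x ω j (derivative (φ j)) + FW.ipj x φ j (derivative (ω j)))
          + (FW.trA x ω j * FW.trM x φ j - FW.trA x ω (j-1) * FW.trP x φ (j-1))
          + (FW.trA x φ j * FW.trM x ω j - FW.trA x φ (j-1) * FW.trP x ω (j-1)) := by
          rw [hb1, hb2]; ring
      _ = -(FW.trM x ω j * FW.trM x φ j - FW.trP x ω (j-1) * FW.trP x φ (j-1))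
          + (FW.trA x ω j * FW.trM x φ j - FW.trA x ω (j-1) * FW.trP x φ (j-1))
          + (FW.trA x φ j * FW.trM x ω j - FW.trA x φ (j-1) * FW.trP x ω (j-1)) := by
          rw [hibp]
      _ = G j - G (j - 1) := by
          simp only [hG, FW.trA]; ring
  rw [Finset.sum_congr rfl (fun j _ => perj j)]
  exact sum_shift G

private theorem consFlux_key (p : ℕ) (c d : ℝ) :
    FW.consFlux p c d * (c - d)
      = c ^ (p+1) / ((p : ℝ) * ((p : ℝ) + 1)) - d ^ (p+1) / ((p : ℝ) * ((p : ℝ) + 1)) := by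
  unfold FW.consFlux
  by_cases h : c = d
  · simp [h]
  · rw [if_neg h]
    have hdc : d - c ≠ 0 := sub_ne_zero.mpr (Ne.symm h)
    field_simp
    ring

/-- FTC for the nonlinear term. -/
private theorem ipfj_ftc (p : ℕ) (hp : 2 ≤ p) (P : Polynomial ℝ) (c d : ℝ) :
    ∫ y in c..d, (P.eval y) ^ p / (p : ℝ) * (derivative P).eval y
      = (P.eval d) ^ (p+1) / ((p : ℝ) * ((p : ℝ)+1))
        - (P.eval c) ^ (p+1) / ((p : ℝ) * ((p : ℝ)+1)) := by
  have hp0 : (p : ℝ) ≠ 0 := by positivity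
  have key : ∀ y : ℝ, HasDerivAt (fun z => (P.eval z) ^ (p+1) / ((p : ℝ) * ((p : ℝ)+1)))
      ((P.eval y) ^ p / (p : ℝ) * (derivative P).eval y) y := by
    intro y
    have h1 : HasDerivAt (fun z => (P.eval z) ^ (p+1))
        (((p : ℝ)+1) * (P.eval y) ^ p * (derivative P).eval y) y := by
      have := (P.hasDerivAt y).fun_pow (p+1)
      simpa [Nat.cast_add] using this
    have h2 := h1.div_const ((p : ℝ) * ((p : ℝ)+1))
    refine h2.congr_deriv ?_
    symm
    have hp1 : (p : ℝ) + 1 ≠ 0 := by positivity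
    rw [div_mul_eq_mul_div, eq_div_iff (mul_ne_zero hp0 hp1), div_mul_eq_mul_div, div_eq_iff hp0]
    ring
  refine intervalIntegral.integral_eq_sub_of_hasDerivAt (fun y _ => key y) ?_
  apply Continuous.intervalIntegrable
  exact ((P.continuous_aeval.pow p).div_const _).mul (derivative P).continuous_aeval

private theorem flux_telescope {N : ℕ} [NeZero N] (x : Fin (N + 1) → ℝ)
    (p : ℕ) (hp : 2 ≤ p) (u : Fin N → Polynomial ℝ) :
    ∑ j, (FW.bdj x (fun i => FW.consFlux p (FW.trM x u i) (FW.trP x u i)) j (u j)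
        - FW.ipfj x (fun w => w ^ p / (p : ℝ)) u j (derivative (u j))) = 0 := by
  classical
  set F : ℝ → ℝ := fun w => w ^ (p+1) / ((p : ℝ) * ((p : ℝ)+1)) with hF
  set fh : Fin N → ℝ := fun i => FW.consFlux p (FW.trM x u i) (FW.trP x u i) with hfh
  set g : Fin N → ℝ := fun i => fh i * FW.trP x u i - F (FW.trP x u i) with hg
  have perj : ∀ j : Fin N,
      FW.bdj x fh j (u j) - FW.ipfj x (fun w => w ^ p / (p : ℝ)) u j (derivative (u j))
        = g j - g (j - 1) := by
    intro j
    have hipf : FW.ipfj x (fun w => w ^ p / (p : ℝ)) u j (derivative (u j))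
        = F (FW.trM x u j) - F (FW.trP x u (j-1)) := by
      unfold FW.ipfj FW.trM
      rw [trP_sub_one]
      exact ipfj_ftc p hp (u j) _ _
    have hbd : FW.bdj x fh j (u j)
        = fh j * FW.trM x u j - fh (j-1) * FW.trP x u (j-1) := by
      unfold FW.bdj FW.trM
      rw [trP_sub_one]
    have hkey : fh j * FW.trM x u j - F (FW.trM x u j)
        = fh j * FW.trP x u j - F (FW.trP x u j) := by
      have := consFlux_key p (FW.trM x u j) (FW.trP x u j)
      simp only [hfh, hF]
      linear_combination this
    rw [hipf, hbd, hg]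
    simp only [hg] at hkey ⊢
    linarith [hkey]
  rw [Finset.sum_congr rfl (fun j _ => perj j)]
  exact sum_shift g

private theorem ipj_zero {N : ℕ} (x : Fin (N + 1) → ℝ) (ω : Fin N → Polynomial ℝ)
    (j : Fin N) : FW.ipj x ω j 0 = 0 := by
  simp [FW.ipj]

private theorem ipfj_zero {N : ℕ} (x : Fin (N + 1) → ℝ) (f : ℝ → ℝ)
    (ω : Fin N → Polynomial ℝ) (j : Fin N) : FW.ipfj x f ω j 0 = 0 := by
  simp [FW.ipfj]

private theorem ipj_comm {N : ℕ} (x : Fin (N + 1) → ℝ) (ω φ : Fin N → Polynomial ℝ)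
    (j : Fin N) : FW.ipj x ω j (φ j) = FW.ipj x φ j (ω j) := by
  unfold FW.ipj
  exact intervalIntegral.integral_congr (fun y _ => mul_comm _ _)

private theorem sum_bdj_one {N : ℕ} [NeZero N] (x : Fin (N + 1) → ℝ) (g : Fin N → ℝ) :
    ∑ j, FW.bdj x g j 1 = 0 := by
  have : ∀ j : Fin N, FW.bdj x g j 1 = g j - g (j - 1) := by
    intro j; simp [FW.bdj]
  rw [Finset.sum_congr rfl (fun j _ => this j)]
  exact sum_shift g

end Aux

theorem stmt10 {N : ℕ} [NeZero N] (hN : 1 ≤ N) (a b : ℝ) (hab : a < b)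
    (x : Fin (N + 1) → ℝ) (hx : StrictMono x) (hxa : x 0 = a) (hxb : x (Fin.last N) = b)
    (k : ℕ) (p : ℕ) (hp : 2 ≤ p) (T : ℝ) (hT : 0 < T)
    (u u' v q : ℝ → Fin N → Polynomial ℝ)
    (hdeg : ∀ t ∈ Set.Icc (0:ℝ) T,
      FW.memV k (u t) ∧ FW.memV k (u' t) ∧ FW.memV k (v t) ∧ FW.memV k (q t))
    (hder : ∀ t ∈ Set.Icc (0:ℝ) T, ∀ (j : Fin N) (m : ℕ),
      HasDerivWithinAt (fun σ => (u σ j).coeff m) ((u' t j).coeff m) (Set.Icc (0:ℝ) T) t)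
    (heq1 : ∀ t ∈ Set.Icc (0:ℝ) T, ∀ (j : Fin N), ∀ φ : Polynomial ℝ,
      φ.degree ≤ (k : WithBot ℕ) →
      FW.ipj x (u' t) j φ
        + FW.bdj x (fun i => FW.consFlux p (FW.trM x (u t) i) (FW.trP x (u t) i)) j φ
        - FW.ipfj x (fun w => w ^ p / (p : ℝ)) (u t) j (Polynomial.derivative φ)
        + FW.ipj x (v t) j φ = 0)
    (heq2 : ∀ t ∈ Set.Icc (0:ℝ) T, ∀ (j : Fin N), ∀ φ : Polynomial ℝ,
      φ.degree ≤ (k : WithBot ℕ) →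
      FW.ipj x (v t) j φ - FW.bdj x (FW.trA x (q t)) j φ
          + FW.ipj x (q t) j (Polynomial.derivative φ)
        = FW.bdj x (FW.trA x (u t)) j φ - FW.ipj x (u t) j (Polynomial.derivative φ))
    (heq3 : ∀ t ∈ Set.Icc (0:ℝ) T, ∀ (j : Fin N), ∀ φ : Polynomial ℝ,
      φ.degree ≤ (k : WithBot ℕ) →
      FW.ipj x (q t) j φ
        = FW.bdj x (FW.trA x (v t)) j φ - FW.ipj x (v t) j (Polynomial.derivative φ)) :
    (∀ t ∈ Set.Icc (0:ℝ) T,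
      HasDerivWithinAt (fun σ => ∑ j : Fin N, ∫ y in (x j.castSucc)..(x j.succ), (u σ j).eval y) 0 (Set.Icc (0:ℝ) T) t)
    ∧ (∀ t ∈ Set.Icc (0:ℝ) T,
      HasDerivWithinAt (fun σ => ∑ j : Fin N, ∫ y in (x j.castSucc)..(x j.succ), ((u σ j).eval y) ^ 2) 0 (Set.Icc (0:ℝ) T) t) := by
  have hdegOne : (1 : Polynomial ℝ).degree ≤ (k : WithBot ℕ) :=
    Polynomial.degree_one_le.trans (by exact_mod_cast Nat.zero_le k)
  -- Mass identity: ∑_j (u'_t, 1)_{I_j} = 0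
  have mass : ∀ t ∈ Set.Icc (0:ℝ) T, ∑ j, FW.ipj x (u' t) j 1 = 0 := by
    intro t ht
    obtain ⟨hu, hu', hv, hq⟩ := hdeg t ht
    have hLc1 : ∀ ω : Fin N → Polynomial ℝ, FW.Lc x ω (fun _ => 1) = 0 := by
      intro ω
      unfold FW.Lc
      simp only [Polynomial.derivative_one, ipj_zero, neg_zero, zero_add]
      exact sum_bdj_one x _
    have hv1 : ∑ j, FW.ipj x (v t) j 1
        = FW.Lc x (q t) (fun _ => 1) + FW.Lc x (u t) (fun _ => 1) := by
      unfold FW.Lc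
      rw [← Finset.sum_add_distrib]
      refine Finset.sum_congr rfl fun j _ => ?_
      have h := heq2 t ht j 1 hdegOne
      linarith
    have hv0 : ∑ j, FW.ipj x (v t) j 1 = 0 := by
      rw [hv1, hLc1, hLc1]; ring
    have E1 : ∑ j, (FW.ipj x (u' t) j 1
        + FW.bdj x (fun i => FW.consFlux p (FW.trM x (u t) i) (FW.trP x (u t) i)) j 1
        - FW.ipfj x (fun w => w ^ p / (p : ℝ)) (u t) j
            (Polynomial.derivative (1 : Polynomial ℝ))
        + FW.ipj x (v t) j 1) = 0 :=
      Finset.sum_eq_zero fun j _ => heq1 t ht j 1 hdegOne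
    simp only [Polynomial.derivative_one, ipfj_zero, sub_zero] at E1
    rw [Finset.sum_add_distrib, Finset.sum_add_distrib, sum_bdj_one, hv0] at E1
    linarith
  -- Energy identity: ∑_j (u'_t, u_t)_{I_j} = 0
  have energy : ∀ t ∈ Set.Icc (0:ℝ) T, ∑ j, FW.ipj x (u' t) j (u t j) = 0 := by
    intro t ht
    obtain ⟨hu, hu', hv, hq⟩ := hdeg t ht
    have hL2 : ∀ ψ : Fin N → Polynomial ℝ, (∀ j, (ψ j).degree ≤ (k : WithBot ℕ)) →
        ∑ j, FW.ipj x (v t) j (ψ j) = FW.Lc x (q t) ψ + FW.Lc x (u t) ψ := by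
      intro ψ hψ
      unfold FW.Lc
      rw [← Finset.sum_add_distrib]
      refine Finset.sum_congr rfl fun j _ => ?_
      have h := heq2 t ht j (ψ j) (hψ j)
      linarith
    have hqq : FW.Lc x (q t) (q t) = 0 := by have := Lc_skew x (q t) (q t); linarith
    have huu : FW.Lc x (u t) (u t) = 0 := by have := Lc_skew x (u t) (u t); linarith
    have hvv : FW.Lc x (v t) (v t) = 0 := by have := Lc_skew x (v t) (v t); linarith
    have h3 : ∑ j, FW.ipj x (q t) j (v t j) = FW.Lc x (v t) (v t) := by
      unfold FW.Lc
      refine Finset.sum_congr rfl fun j _ => ?_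
      have h := heq3 t ht j (v t j) (hv j)
      linarith
    have huqz : FW.Lc x (u t) (q t) = 0 := by
      have h1 := hL2 (q t) hq
      rw [hqq, zero_add] at h1
      calc FW.Lc x (u t) (q t) = ∑ j, FW.ipj x (v t) j (q t j) := h1.symm
        _ = ∑ j, FW.ipj x (q t) j (v t j) :=
            Finset.sum_congr rfl fun j _ => ipj_comm x (v t) (q t) j
        _ = FW.Lc x (v t) (v t) := h3
        _ = 0 := hvv
    have hvu : ∑ j, FW.ipj x (v t) j (u t j) = 0 := by
      have h1 := hL2 (u t) hu
      have hqu : FW.Lc x (q t) (u t) = 0 := by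
        have := Lc_skew x (u t) (q t); linarith
      rw [h1, hqu, huu]; ring
    have E1 : ∑ j, (FW.ipj x (u' t) j (u t j)
        + FW.bdj x (fun i => FW.consFlux p (FW.trM x (u t) i) (FW.trP x (u t) i)) j (u t j)
        - FW.ipfj x (fun w => w ^ p / (p : ℝ)) (u t) j (Polynomial.derivative (u t j))
        + FW.ipj x (v t) j (u t j)) = 0 :=
      Finset.sum_eq_zero fun j _ => heq1 t ht j (u t j) (hu j)
    have hft := flux_telescope x p hp (u t)
    rw [Finset.sum_sub_distrib] at hft
    simp only [Finset.sum_add_distrib, Finset.sum_sub_distrib] at E1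
    linarith
  constructor
  · intro t ht
    have h0 : HasDerivWithinAt
        (fun σ => ∑ j : Fin N, ∫ y in (x j.castSucc)..(x j.succ), (u σ j).eval y)
        (∑ j : Fin N, ∫ y in (x j.castSucc)..(x j.succ), (u' t j).eval y)
        (Set.Icc (0:ℝ) T) t :=
      HasDerivWithinAt.fun_sum fun j _ =>
        hasDeriv_int k (x j.castSucc) (x j.succ) (Set.Icc (0:ℝ) T) t
          (fun σ => u σ j) (u' t j)
          (fun σ hσ => (hdeg σ hσ).1 j) ((hdeg t ht).2.1 j) ht (hder t ht j)
    have hz : (∑ j : Fin N, ∫ y in (x j.castSucc)..(x j.succ), (u' t j).eval y) = 0 := by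
      rw [← mass t ht]
      exact Finset.sum_congr rfl fun j _ => by simp [FW.ipj]
    exact hz ▸ h0
  · intro t ht
    have h0 : HasDerivWithinAt
        (fun σ => ∑ j : Fin N, ∫ y in (x j.castSucc)..(x j.succ), ((u σ j).eval y) ^ 2)
        (∑ j : Fin N, 2 * ∫ y in (x j.castSucc)..(x j.succ),
            (u' t j).eval y * (u t j).eval y)
        (Set.Icc (0:ℝ) T) t :=
      HasDerivWithinAt.fun_sum fun j _ =>
        hasDeriv_int_sq k (x j.castSucc) (x j.succ) (Set.Icc (0:ℝ) T) t
          (fun σ => u σ j) (u' t j)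
          (fun σ hσ => (hdeg σ hσ).1 j) ((hdeg t ht).2.1 j) ht (hder t ht j)
    have hz : (∑ j : Fin N, 2 * ∫ y in (x j.castSucc)..(x j.succ),
        (u' t j).eval y * (u t j).eval y) = 0 := by
      have h2 : (∑ j : Fin N, 2 * ∫ y in (x j.castSucc)..(x j.succ),
          (u' t j).eval y * (u t j).eval y)
          = 2 * ∑ j, FW.ipj x (u' t) j (u t j) := by
        rw [Finset.mul_sum]
        rfl
      rw [h2, energy t ht]; ring
    exact hz ▸ h0
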